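/- Let m ∈ ℕ. If Ω : (ℕ∖{0}) × ℤ → ℤ is a DT-exponent function for the 1×1 matrix [m+1] (the (m+1)-loop quiver), then the map (r,s) ↦ −Ω(r, 2−r−s) is a DT-exponent function for the 1×1 matrix [−m] (the (−m)-loop quiver). Equivalently, the motivic DT invariants satisfy Ω^{−m}_r(q) = −q^{2−r}·Ω^{m+1}_r(q^{−1}), where Ω^{m}_r(q) = Σ_s Ω^{m}(r,s) q^s. -/

import Mathlib

noncomputable section

/-- The base field `K = ℚ(q)`. -/
abbrev K : Type := RatFunc ℚ

/-- The variable `q` of `K = ℚ(q)`. -/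
def qq : K := RatFunc.X

/-- The finite q-Pochhammer symbol `(α; q²)_n = ∏_{k=0}^{n-1} (1 - α q^{2k})`. -/
def qPoch (α : K) (n : ℕ) : K := ∏ k ∈ Finset.range n, (1 - α * qq ^ (2 * k))

/-- The quadratic form `dᵀ C d` of an integer matrix on a dimension vector. -/
def quadForm {N : ℕ} (C : Matrix (Fin N) (Fin N) ℤ) (d : Fin N → ℕ) : ℤ :=
  ∑ i, ∑ j, C i j * (d i : ℤ) * (d j : ℤ)

/-- The coefficient of `x^d` in the motivic generating series of the extended
symmetric quiver with adjacency matrix `C`: `(-q)^{dᵀCd} / ∏ᵢ (q²;q²)_{dᵢ}`. -/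
def Pcoeff {N : ℕ} (C : Matrix (Fin N) (Fin N) ℤ) (d : Fin N → ℕ) : K :=
  (-qq) ^ quadForm C d / ∏ i, qPoch (qq ^ 2) (d i)

/-- The motivic generating series `P_C ∈ K[[x_1,…,x_N]]`. -/
def Pser {N : ℕ} (C : Matrix (Fin N) (Fin N) ℤ) : MvPowerSeries (Fin N) K :=
  fun d => Pcoeff C (fun i => d i)

open Classical in
/-- Formal expansion of the infinite q-Pochhammer `(q^s x^d ; q²)_∞`:
its coefficient at `j • d` is `(-1)^j q^{j(j-1)+js} / (q²;q²)_j`, and all other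
coefficients vanish. -/
def Poch {N : ℕ} (d : Fin N →₀ ℕ) (s : ℤ) : MvPowerSeries (Fin N) K :=
  fun e =>
    if h : ∃ j : ℕ, e = j • d then
      (-1 : K) ^ h.choose *
        qq ^ ((h.choose : ℤ) * ((h.choose : ℤ) - 1) + (h.choose : ℤ) * s) /
        qPoch (qq ^ 2) h.choose
    else 0

lemma qPoch_zero (α : K) : qPoch α 0 = 1 := by simp [qPoch]

lemma constantCoeff_Poch {N : ℕ} {d : Fin N →₀ ℕ} (hd : d ≠ 0) (s : ℤ) :
    MvPowerSeries.constantCoeff (Poch d s) = 1 := by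
  have h : ∃ j : ℕ, (0 : Fin N →₀ ℕ) = j • d := ⟨0, by simp⟩
  have hc : h.choose = 0 := by
    by_contra hc
    obtain ⟨x, hx⟩ := Finsupp.ne_iff.mp hd
    have hs := h.choose_spec
    have hx0 : (0 : Fin N →₀ ℕ) x = (h.choose • d) x := by rw [← hs]
    simp only [Finsupp.coe_zero, Pi.zero_apply, Finsupp.smul_apply, smul_eq_mul] at hx0
    rcases Nat.mul_eq_zero.mp hx0.symm with h1 | h2
    · exact hc h1
    · simp at hx; exact hx h2
  have h0 : MvPowerSeries.constantCoeff (Poch d s) = Poch d s 0 := rfl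
  rw [h0]
  unfold Poch
  rw [dif_pos h, hc]
  simp [qPoch_zero]

lemma isUnit_Poch {N : ℕ} {d : Fin N →₀ ℕ} (hd : d ≠ 0) (s : ℤ) :
    IsUnit (Poch d s) := by
  rw [MvPowerSeries.isUnit_iff_constantCoeff, constantCoeff_Poch hd s]
  exact isUnit_one

/-- `Poch d s` as an element of the unit group of `K[[x_1,…,x_N]]` (for `d ≠ 0`). -/
def PochUnit {N : ℕ} (d : Fin N →₀ ℕ) (hd : d ≠ 0) (s : ℤ) : (MvPowerSeries (Fin N) K)ˣ :=
  (isUnit_Poch hd s).unit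

open Classical in
/-- The product `∏_{0 < |d| ≤ n} ∏_s Poch(d,s)^{Ω(d,s)}`, taken in the unit group of
`K[[x_1,…,x_N]]` (integer powers allowed). -/
def DTProd {N : ℕ} (Ω : (Fin N →₀ ℕ) → ℤ → ℤ) (n : ℕ) : (MvPowerSeries (Fin N) K)ˣ :=
  ∏ᶠ (d : Fin N →₀ ℕ) (s : ℤ),
    if h : d ≠ 0 ∧ (d.sum fun _ c => c) ≤ n then PochUnit d h.1 s ^ Ω d s else 1

/-- `Ω` is a DT-exponent function for `C`: for every `d ≠ 0` only finitely many `Ω d s`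
are nonzero, and for every `n` the coefficients of `P_C` and of the finite product
`∏_{0<|d|≤n} ∏_{s} Poch(d,s)^{Ω(d,s)}` agree on all monomials of total degree `≤ n`.
The values `Ω d s` are the motivic Donaldson–Thomas invariants of `C`. -/
def IsDTExponent {N : ℕ} (C : Matrix (Fin N) (Fin N) ℤ) (Ω : (Fin N →₀ ℕ) → ℤ → ℤ) : Prop :=
  (∀ d : Fin N →₀ ℕ, d ≠ 0 → (Function.support (Ω d)).Finite) ∧
  ∀ n : ℕ, ∀ d : Fin N →₀ ℕ, (d.sum fun _ c => c) ≤ n →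
    MvPowerSeries.coeff d (Pser C) = MvPowerSeries.coeff d ↑(DTProd Ω n)

lemma qq_ne_zero : qq ≠ 0 := RatFunc.X_ne_zero

def sigmaPoly : Polynomial ℚ →+* K := (Polynomial.aeval (qq⁻¹ : K)).toRingHom

instance : Invertible (qq : K) := invertibleOfNonzero qq_ne_zero

lemma algMap_inj : Function.Injective (algebraMap (Polynomial ℚ) K) :=
  IsFractionRing.injective _ _

lemma qq_eq : (qq : K) = algebraMap (Polynomial ℚ) K Polynomial.X := (RatFunc.algebraMap_X).symm

lemma sigmaPoly_inj : Function.Injective sigmaPoly := by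
  rw [injective_iff_map_eq_zero]
  intro p hp
  have h : Polynomial.eval₂ (algebraMap ℚ K) (⅟(qq:K)) p = 0 := by
    rw [invOf_eq_inv]; exact hp
  have h4 := (Polynomial.eval₂_reverse_eq_zero_iff (algebraMap ℚ K) (⅟(qq:K)) p).mpr h
  rw [invOf_invOf] at h4
  rw [← Polynomial.aeval_def, qq_eq, Polynomial.aeval_algebraMap_apply,
    Polynomial.aeval_X_left_apply] at h4
  exact Polynomial.reverse_eq_zero.mp (algMap_inj (h4.trans (map_zero _).symm))

def sigma : K →+* K := IsFractionRing.lift sigmaPoly_inj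

lemma sigma_algebraMap (p : Polynomial ℚ) :
    sigma (algebraMap _ _ p) = Polynomial.aeval (qq⁻¹ : K) p :=
  IsFractionRing.lift_algebraMap _ _

@[simp] lemma sigma_qq : sigma qq = qq⁻¹ := by
  rw [qq_eq, sigma_algebraMap, Polynomial.aeval_X, ← qq_eq]

@[simp] lemma sigma_zpow_qq (n : ℤ) : sigma (qq ^ n) = qq ^ (-n) := by
  rw [map_zpow₀, sigma_qq, inv_zpow']

@[simp] lemma sigma_pow_qq (n : ℕ) : sigma (qq ^ n) = qq ^ (-(n:ℤ)) := by
  rw [← zpow_natCast qq n, sigma_zpow_qq]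


lemma one_sub_qq_pow_ne_zero {n : ℕ} (hn : n ≠ 0) : (1 : K) - qq ^ n ≠ 0 := by
  intro h
  have h2 : algebraMap (Polynomial ℚ) K (1 - Polynomial.X ^ n) = algebraMap _ _ (0 : Polynomial ℚ) := by
    rw [map_sub, map_one, map_pow, ← qq_eq, map_zero]
    exact h
  have h3 := algMap_inj h2
  have h4 := congrArg (fun p => Polynomial.coeff p 0) h3
  simp only [Polynomial.coeff_sub, Polynomial.coeff_one, Polynomial.coeff_X_pow,
    Polynomial.coeff_zero] at h4
  rw [if_pos trivial, if_neg (by omega : ¬ (0 = n))] at h4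
  norm_num at h4

lemma qPoch_succ (n : ℕ) :
    qPoch (qq ^ 2) (n + 1) = qPoch (qq ^ 2) n * (1 - qq ^ (2 * n + 2)) := by
  rw [qPoch, Finset.prod_range_succ, ← qPoch]
  ring_nf

lemma qPoch_zero' : qPoch (qq ^ 2) 0 = 1 := by simp [qPoch]

lemma qPoch_ne_zero (n : ℕ) : qPoch (qq ^ 2) n ≠ 0 := by
  induction n with
  | zero => rw [qPoch_zero']; exact one_ne_zero
  | succ n ih =>
    rw [qPoch_succ]
    exact mul_ne_zero ih (one_sub_qq_pow_ne_zero (by omega))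

lemma sigma_qPoch (n : ℕ) :
    sigma (qPoch (qq ^ 2) n) = (-1 : K) ^ n * qq ^ (-(n * (n + 1) : ℤ)) * qPoch (qq ^ 2) n := by
  induction n with
  | zero => simp [qPoch_zero']
  | succ n ih =>
    rw [qPoch_succ, map_mul, ih, map_sub, map_one, sigma_pow_qq]
    rw [show (-((2*n+2 : ℕ) : ℤ)) = -(2*(n:ℤ)+2) by push_cast; ring]
    rw [show (-(((n+1:ℕ)) * ((n+1:ℕ) + 1) : ℤ)) = (-((n:ℤ)*((n:ℤ)+1))) + (-(2*(n:ℤ)+2)) by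
      push_cast; ring]
    rw [zpow_add₀ qq_ne_zero]
    have hAB : qq ^ (-(2*(n:ℤ)+2)) * qq ^ (2*n+2 : ℕ) = 1 := by
      rw [← zpow_natCast qq (2*n+2), ← zpow_add₀ qq_ne_zero,
        show (-(2*(n:ℤ)+2) + ((2*n+2 : ℕ) : ℤ)) = 0 by push_cast; ring, zpow_zero]
    set A := qq ^ (-(2*(n:ℤ)+2)) with hA
    set B := qq ^ (2*n+2 : ℕ) with hB
    set C := qq ^ (-((n:ℤ)*((n:ℤ)+1))) with hC
    set P := qPoch (qq ^ 2) n with hP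
    linear_combination (-((-1:K)^n * C * P)) * hAB

def resc : MvPowerSeries (Fin 1) K →+* MvPowerSeries (Fin 1) K where
  toFun φ e := qq ^ (-(e 0 : ℤ)) * MvPowerSeries.coeff e φ
  map_zero' := MvPowerSeries.ext fun e =>
    show qq ^ (-(e 0 : ℤ)) * MvPowerSeries.coeff e 0 = MvPowerSeries.coeff e 0 by simp
  map_one' := MvPowerSeries.ext fun e =>
    show qq ^ (-(e 0 : ℤ)) * MvPowerSeries.coeff e 1 = MvPowerSeries.coeff e 1 by
      rw [MvPowerSeries.coeff_one]
      split_ifs with h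
      · subst h; simp
      · simp
  map_add' φ ψ := MvPowerSeries.ext fun e => by
    show qq ^ (-(e 0 : ℤ)) * MvPowerSeries.coeff e (φ + ψ) = _
    rw [map_add]
    show _ = qq ^ (-(e 0 : ℤ)) * MvPowerSeries.coeff e φ
      + qq ^ (-(e 0 : ℤ)) * MvPowerSeries.coeff e ψ
    ring
  map_mul' φ ψ := MvPowerSeries.ext fun e => by
    show qq ^ (-(e 0 : ℤ)) * MvPowerSeries.coeff e (φ * ψ) = _
    rw [MvPowerSeries.coeff_mul, Finset.mul_sum]
    refine Eq.trans ?_ (MvPowerSeries.coeff_mul _ _ _).symm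
    apply Finset.sum_congr rfl
    rintro ⟨i, j⟩ hij
    have h0 : i 0 + j 0 = e 0 := by
      have h := Finset.HasAntidiagonal.mem_antidiagonal.mp hij
      rw [← h]; rfl
    have he : qq ^ (-(e 0 : ℤ)) = qq ^ (-(i 0 : ℤ)) * qq ^ (-(j 0 : ℤ)) := by
      rw [← zpow_add₀ qq_ne_zero]; congr 1; omega
    rw [he]
    show qq ^ (-(i 0:ℤ)) * qq ^ (-(j 0:ℤ)) *
        (MvPowerSeries.coeff i φ * MvPowerSeries.coeff j ψ)
      = (qq ^ (-(i 0:ℤ)) * MvPowerSeries.coeff i φ) *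
        (qq ^ (-(j 0:ℤ)) * MvPowerSeries.coeff j ψ)
    ring

def Phi : MvPowerSeries (Fin 1) K →+* MvPowerSeries (Fin 1) K :=
  resc.comp (MvPowerSeries.map sigma)

lemma Phi_coeff (f : MvPowerSeries (Fin 1) K) (e : Fin 1 →₀ ℕ) :
    MvPowerSeries.coeff e (Phi f) = qq ^ (-(e 0 : ℤ)) * sigma (MvPowerSeries.coeff e f) := rfl

lemma Phi_injective : Function.Injective Phi := by
  intro f g h
  apply MvPowerSeries.ext
  intro e
  have := congrArg (MvPowerSeries.coeff e) h
  rw [Phi_coeff, Phi_coeff] at this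
  have h2 := mul_left_cancel₀ (zpow_ne_zero _ qq_ne_zero) this
  exact sigma.injective h2


/-! ### w and the Euler-type identity -/

def w (j : ℕ) : K := (qPoch (qq ^ 2) j)⁻¹

lemma w_zero : w 0 = 1 := by rw [w, qPoch_zero', inv_one]

lemma w_succ (j : ℕ) : w j = (1 - qq ^ (2 * j + 2)) * w (j + 1) := by
  rw [w, w, qPoch_succ, mul_inv, ← mul_assoc,
    mul_comm ((1 : K) - qq ^ (2 * j + 2)) ((qPoch (qq ^ 2) j)⁻¹), mul_assoc,
    mul_inv_cancel₀ (one_sub_qq_pow_ne_zero (by omega)), mul_one]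

def uu (k : ℕ) : K := (-1 : K) ^ k * qq ^ (k * (k - 1)) * w k

lemma uu_rec (k : ℕ) : uu (k + 1) = qq ^ (2 * k + 2) * uu (k + 1) - qq ^ (2 * k) * uu k := by
  have h := w_succ k
  rw [uu, uu, Nat.add_sub_cancel]
  rw [show (k + 1) * k = 2 * k + (k * (k - 1)) by cases k with
    | zero => simp
    | succ j => simp [Nat.add_sub_cancel]; ring]
  rw [h, pow_add, pow_add]
  ring

lemma euler_sum (n : ℕ) (hn : n ≠ 0) :
    ∑ k ∈ Finset.range (n + 1), uu k * w (n - k) = 0 := by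
  have step : ∀ k ∈ Finset.range n, uu (k + 1) * w (n - (k + 1)) =
      qq ^ (2 * (k + 1)) * (uu (k + 1) * w (n - (k + 1)))
      - qq ^ (2 * k) * (uu k * w (n - k)) + qq ^ (2 * n) * (uu k * w (n - k)) := by
    intro k hk
    have hkn : k < n := Finset.mem_range.mp hk
    have hw : w (n - (k + 1)) = (1 - qq ^ (2 * (n - k))) * w (n - k) := by
      have h2 := w_succ (n - (k + 1))
      rw [show n - (k + 1) + 1 = n - k by omega, show 2 * (n - (k + 1)) + 2 = 2 * (n - k) by
        omega] at h2
      exact h2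
    have hq : qq ^ (2 * k) * qq ^ (2 * (n - k)) = qq ^ (2 * n) := by
      rw [← pow_add]; congr 1; omega
    calc uu (k + 1) * w (n - (k + 1))
        = (qq ^ (2 * k + 2) * uu (k + 1) - qq ^ (2 * k) * uu k) * w (n - (k + 1)) := by
          rw [← uu_rec]
      _ = qq ^ (2 * (k + 1)) * (uu (k + 1) * w (n - (k + 1)))
          - qq ^ (2 * k) * (uu k * ((1 - qq ^ (2 * (n - k))) * w (n - k))) := by
          rw [← hw, show 2 * (k + 1) = 2 * k + 2 by ring]; ring
      _ = qq ^ (2 * (k + 1)) * (uu (k + 1) * w (n - (k + 1)))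
          - qq ^ (2 * k) * (uu k * w (n - k)) + qq ^ (2 * n) * (uu k * w (n - k)) := by
          linear_combination (uu k * w (n - k)) * hq
  have h1 : ∑ k ∈ Finset.range (n + 1), uu k * w (n - k)
      = (∑ k ∈ Finset.range n, (qq ^ (2 * (k + 1)) * (uu (k + 1) * w (n - (k + 1)))
        - qq ^ (2 * k) * (uu k * w (n - k)) + qq ^ (2 * n) * (uu k * w (n - k))))
        + uu 0 * w (n - 0) := by
    rw [Finset.sum_range_succ']
    exact congrArg (· + uu 0 * w (n - 0)) (Finset.sum_congr rfl step)
  have h1' : ∑ k ∈ Finset.range (n + 1), uu k * w (n - k)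
      = (∑ k ∈ Finset.range n, qq ^ (2 * (k + 1)) * (uu (k + 1) * w (n - (k + 1))))
        - (∑ k ∈ Finset.range n, qq ^ (2 * k) * (uu k * w (n - k)))
        + (∑ k ∈ Finset.range n, qq ^ (2 * n) * (uu k * w (n - k)))
        + uu 0 * w (n - 0) := by
    rw [h1, Finset.sum_add_distrib, Finset.sum_sub_distrib]
  have h2 : (∑ k ∈ Finset.range n, qq ^ (2 * (k + 1)) * (uu (k + 1) * w (n - (k + 1))))
      + uu 0 * w (n - 0)
      = ∑ k ∈ Finset.range (n + 1), qq ^ (2 * k) * (uu k * w (n - k)) := by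
    rw [Finset.sum_range_succ']
    simp
  have h3 : (∑ k ∈ Finset.range n, qq ^ (2 * k) * (uu k * w (n - k)))
      = (∑ k ∈ Finset.range (n + 1), qq ^ (2 * k) * (uu k * w (n - k)))
        - qq ^ (2 * n) * (uu n * w (n - n)) := by
    rw [Finset.sum_range_succ]; ring
  have h4 : (∑ k ∈ Finset.range n, qq ^ (2 * n) * (uu k * w (n - k)))
      = qq ^ (2 * n) * ∑ k ∈ Finset.range n, uu k * w (n - k) :=
    (Finset.mul_sum _ _ _).symm
  have hsn : ∑ k ∈ Finset.range (n + 1), uu k * w (n - k)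
      = (∑ k ∈ Finset.range n, uu k * w (n - k)) + uu n * w (n - n) :=
    Finset.sum_range_succ _ n
  have key : ∑ k ∈ Finset.range (n + 1), uu k * w (n - k)
      = qq ^ (2 * n) * ∑ k ∈ Finset.range (n + 1), uu k * w (n - k) := by
    linear_combination h1' + h2 - h3 + h4 - qq ^ (2 * n) * hsn
  have hne : (1 : K) - qq ^ (2 * n) ≠ 0 := one_sub_qq_pow_ne_zero (by omega)
  have hz : (1 - qq ^ (2 * n)) * ∑ k ∈ Finset.range (n + 1), uu k * w (n - k) = 0 := by
    linear_combination key
  rcases mul_eq_zero.mp hz with h | h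
  · exact absurd h hne
  · exact h

lemma fin1_ext {a b : Fin 1 →₀ ℕ} (h : a 0 = b 0) : a = b := by
  apply Finsupp.ext
  intro x
  rw [Subsingleton.elim x 0]
  exact h

lemma d0_ne {d : Fin 1 →₀ ℕ} (hd : d ≠ 0) : d 0 ≠ 0 := by
  intro h
  exact hd (fin1_ext (by simp [h]))

lemma smul_apply0 (j : ℕ) (d : Fin 1 →₀ ℕ) : (j • d) 0 = j * d 0 := by
  simp

lemma smul_cancel {d : Fin 1 →₀ ℕ} (hd : d ≠ 0) {a b : ℕ} (h : a • d = b • d) : a = b := by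
  have h0 : a * d 0 = b * d 0 := by
    have := congrArg (fun f : Fin 1 →₀ ℕ => f 0) h
    simpa using this
  exact Nat.eq_of_mul_eq_mul_right (Nat.pos_of_ne_zero (d0_ne hd)) h0

lemma Poch_coeff_smul {d : Fin 1 →₀ ℕ} (hd : d ≠ 0) (s : ℤ) (j : ℕ) :
    Poch d s (j • d)
      = (-1 : K) ^ j * qq ^ ((j : ℤ) * ((j : ℤ) - 1) + (j : ℤ) * s) * w j := by
  have h : ∃ i : ℕ, (j • d) = i • d := ⟨j, rfl⟩
  simp only [Poch]
  rw [dif_pos h]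
  rw [show h.choose = j from (smul_cancel hd h.choose_spec).symm]
  rw [div_eq_mul_inv, w]

lemma Poch_coeff_zero {d : Fin 1 →₀ ℕ} (s : ℤ) {e : Fin 1 →₀ ℕ}
    (he : ¬ ∃ j : ℕ, e = j • d) : Poch d s e = 0 := by
  simp only [Poch]
  rw [dif_neg he]

lemma PhiPoch_coeff {d : Fin 1 →₀ ℕ} (hd : d ≠ 0) (s : ℤ) (j : ℕ) :
    MvPowerSeries.coeff (j • d) (Phi (Poch d s))
      = qq ^ ((j : ℤ) * (2 - (d 0 : ℤ) - s)) * w j := by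
  rw [Phi_coeff, MvPowerSeries.coeff_apply, Poch_coeff_smul hd s j]
  rw [map_mul, map_mul, map_pow, map_neg, map_one, sigma_zpow_qq, w, map_inv₀, sigma_qPoch j]
  rw [mul_inv, mul_inv, ← zpow_neg, neg_neg]
  have hinv : ((-1 : K) ^ j)⁻¹ = (-1 : K) ^ j := by
    rw [← inv_pow, inv_neg, inv_one]
  rw [hinv]
  have h0 : (((j • d) 0 : ℕ) : ℤ) = -(-((j : ℤ) * (d 0 : ℤ))) := by
    rw [smul_apply0]; push_cast; ring
  rw [h0, neg_neg]
  have hsign : (-1 : K) ^ j * (-1 : K) ^ j = 1 := by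
    rw [← mul_pow]; norm_num
  have hgather : qq ^ (-((j : ℤ) * (d 0 : ℤ)))
      * (qq ^ (-((j : ℤ) * ((j : ℤ) - 1) + (j : ℤ) * s)) * qq ^ ((j : ℤ) * ((j : ℤ) + 1)))
      = qq ^ ((j : ℤ) * (2 - (d 0 : ℤ) - s)) := by
    rw [← zpow_add₀ qq_ne_zero, ← zpow_add₀ qq_ne_zero]
    congr 1
    ring
  linear_combination (qq ^ (-((j : ℤ) * (d 0 : ℤ)))
      * qq ^ (-((j : ℤ) * ((j : ℤ) - 1) + (j : ℤ) * s)) * qq ^ ((j : ℤ) * ((j : ℤ) + 1))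
      * (qPoch (qq ^ 2) j)⁻¹) * hsign + (qPoch (qq ^ 2) j)⁻¹ * hgather

lemma zpow_cast_mul_pred (k : ℕ) : qq ^ ((k : ℤ) * ((k : ℤ) - 1)) = qq ^ (k * (k - 1)) := by
  cases k with
  | zero => simp
  | succ j =>
    rw [show ((j + 1 : ℕ) : ℤ) * (((j + 1 : ℕ) : ℤ) - 1) = (((j + 1) * j : ℕ) : ℤ) by
      push_cast; ring, zpow_natCast, Nat.add_sub_cancel]

lemma euler_sum' (n : ℕ) (hn : n ≠ 0) :
    ∑ k ∈ Finset.range (n + 1),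
      (-1 : K) ^ k * qq ^ ((k : ℤ) * ((k : ℤ) - 1)) * (w (n - k) * w k) = 0 := by
  calc ∑ k ∈ Finset.range (n + 1),
      (-1 : K) ^ k * qq ^ ((k : ℤ) * ((k : ℤ) - 1)) * (w (n - k) * w k)
      = ∑ k ∈ Finset.range (n + 1), uu k * w (n - k) :=
        Finset.sum_congr rfl (fun k _ => by rw [zpow_cast_mul_pred, uu]; ring)
    _ = 0 := euler_sum n hn

lemma Phi_Poch_mul {d : Fin 1 →₀ ℕ} (hd : d ≠ 0) (s : ℤ) :
    Phi (Poch d s) * Poch d (2 - (d 0 : ℤ) - s) = 1 := by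
  have hd0 : 0 < d 0 := Nat.pos_of_ne_zero (d0_ne hd)
  apply MvPowerSeries.ext
  intro e
  rw [MvPowerSeries.coeff_mul, MvPowerSeries.coeff_one]
  by_cases he : ∃ n : ℕ, e = n • d
  · obtain ⟨n, rfl⟩ := he
    have hsub : (Finset.range (n + 1)).image (fun j => (j • d, (n - j) • d))
        ⊆ Finset.HasAntidiagonal.antidiagonal (n • d) := by
      intro p hp
      obtain ⟨j, hj, rfl⟩ := Finset.mem_image.mp hp
      have hjn : j ≤ n := Nat.lt_succ_iff.mp (Finset.mem_range.mp hj)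
      rw [Finset.HasAntidiagonal.mem_antidiagonal, ← add_smul]
      congr 1
      omega
    have hvan : ∀ p ∈ Finset.HasAntidiagonal.antidiagonal (n • d),
        p ∉ (Finset.range (n + 1)).image (fun j => (j • d, (n - j) • d)) →
        MvPowerSeries.coeff p.1 (Phi (Poch d s))
          * MvPowerSeries.coeff p.2 (Poch d (2 - (d 0 : ℤ) - s)) = 0 := by
      intro p hp hpim
      by_cases h1 : ∃ j : ℕ, p.1 = j • d
      · exfalso
        obtain ⟨j, hj⟩ := h1
        have hadd : p.1 0 + p.2 0 = n * d 0 := by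
          have := congrArg (fun f : Fin 1 →₀ ℕ => f 0) (Finset.HasAntidiagonal.mem_antidiagonal.mp hp)
          simpa using this
        have hj0 : p.1 0 = j * d 0 := by rw [hj]; simp
        have hjn : j ≤ n := by
          have : j * d 0 ≤ n * d 0 := by omega
          exact Nat.le_of_mul_le_mul_right this hd0
        have hp2 : p.2 = (n - j) • d := by
          apply fin1_ext
          rw [smul_apply0]
          have : (n - j) * d 0 = n * d 0 - j * d 0 := by
            rw [Nat.sub_mul]
          omega
        apply hpim
        apply Finset.mem_image.mpr
        exact ⟨j, Finset.mem_range.mpr (by omega), by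
          rw [← hj, ← hp2]⟩
      · rw [Phi_coeff, MvPowerSeries.coeff_apply (f := Poch d s) (d := p.1), Poch_coeff_zero s h1]
        simp
    have hinj : ∀ x ∈ Finset.range (n + 1), ∀ y ∈ Finset.range (n + 1),
        (fun j => (j • d, (n - j) • d)) x = (fun j => (j • d, (n - j) • d)) y → x = y := by
      intro x _ y _ hxy
      have := congrArg Prod.fst hxy
      exact smul_cancel hd this
    have hS : ∑ p ∈ Finset.HasAntidiagonal.antidiagonal (n • d),
        MvPowerSeries.coeff p.1 (Phi (Poch d s))
          * MvPowerSeries.coeff p.2 (Poch d (2 - (d 0 : ℤ) - s))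
        = ∑ j ∈ Finset.range (n + 1),
          MvPowerSeries.coeff (j • d) (Phi (Poch d s))
            * MvPowerSeries.coeff ((n - j) • d) (Poch d (2 - (d 0 : ℤ) - s)) := by
      rw [← Finset.sum_subset hsub hvan, Finset.sum_image hinj]
    rw [hS]
    rcases Nat.eq_zero_or_pos n with rfl | hn
    · rw [Finset.sum_range_one]
      simp only [Nat.sub_self]
      rw [PhiPoch_coeff hd s 0, MvPowerSeries.coeff_apply, Poch_coeff_smul hd _ 0]
      rw [if_pos (by rw [zero_smul])]
      simp [w_zero]
    · have hne : ¬ (n • d = 0) := by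
        intro h
        have := congrArg (fun f : Fin 1 →₀ ℕ => f 0) h
        simp at this
        omega
      rw [if_neg hne]
      have hterm : ∀ j ∈ Finset.range (n + 1),
          MvPowerSeries.coeff (j • d) (Phi (Poch d s))
            * MvPowerSeries.coeff ((n - j) • d) (Poch d (2 - (d 0 : ℤ) - s))
          = qq ^ ((n : ℤ) * (2 - (d 0 : ℤ) - s)) *
            ((-1 : K) ^ (n - j) * qq ^ (((n - j : ℕ) : ℤ) * (((n - j : ℕ) : ℤ) - 1))
              * (w (n - (n - j)) * w (n - j))) := by
        intro j hj
        have hjn : j ≤ n := by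
          have := Finset.mem_range.mp hj; omega
        rw [PhiPoch_coeff hd s j, MvPowerSeries.coeff_apply, Poch_coeff_smul hd _ (n - j)]
        rw [show n - (n - j) = j by omega]
        have hcast : ((n - j : ℕ) : ℤ) = (n : ℤ) - (j : ℤ) := by omega
        have hqe : qq ^ ((j : ℤ) * (2 - (d 0 : ℤ) - s))
            * qq ^ (((n - j : ℕ) : ℤ) * (((n - j : ℕ) : ℤ) - 1) + ((n - j : ℕ) : ℤ) * (2 - (d 0 : ℤ) - s))
            = qq ^ ((n : ℤ) * (2 - (d 0 : ℤ) - s))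
              * qq ^ (((n - j : ℕ) : ℤ) * (((n - j : ℕ) : ℤ) - 1)) := by
          rw [← zpow_add₀ qq_ne_zero, ← zpow_add₀ qq_ne_zero]
          congr 1
          rw [hcast]; ring
        linear_combination (w j * w (n - j) * (-1 : K) ^ (n - j)) * hqe
      rw [Finset.sum_congr rfl hterm, ← Finset.mul_sum]
      have hrefl : ∑ j ∈ Finset.range (n + 1),
          ((-1 : K) ^ (n - j) * qq ^ (((n - j : ℕ) : ℤ) * (((n - j : ℕ) : ℤ) - 1))
            * (w (n - (n - j)) * w (n - j))) = 0 := by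
        have h := Finset.sum_range_reflect
          (fun (k : ℕ) => (-1 : K) ^ k * qq ^ ((k : ℤ) * ((k : ℤ) - 1)) * (w (n - k) * w k))
          (n + 1)
        calc ∑ j ∈ Finset.range (n + 1),
            ((-1 : K) ^ (n - j) * qq ^ (((n - j : ℕ) : ℤ) * (((n - j : ℕ) : ℤ) - 1))
              * (w (n - (n - j)) * w (n - j)))
            = ∑ j ∈ Finset.range (n + 1),
              (fun (k : ℕ) => (-1 : K) ^ k * qq ^ ((k : ℤ) * ((k : ℤ) - 1)) * (w (n - k) * w k))
                (n + 1 - 1 - j) := by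
              refine Finset.sum_congr rfl (fun j hj => ?_)
              rw [show n + 1 - 1 - j = n - j from by omega]
          _ = 0 := by rw [h]; exact euler_sum' n (by omega)
      rw [hrefl, mul_zero]
  · have he0 : ¬ (e = 0) := by
      intro h
      exact he ⟨0, by rw [h, zero_smul]⟩
    rw [if_neg he0]
    apply Finset.sum_eq_zero
    intro p hp
    by_cases h1 : ∃ j : ℕ, p.1 = j • d
    · by_cases h2 : ∃ k : ℕ, p.2 = k • d
      · exfalso
        obtain ⟨j, hj⟩ := h1
        obtain ⟨k, hk⟩ := h2
        exact he ⟨j + k, by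
          rw [← Finset.HasAntidiagonal.mem_antidiagonal.mp hp, hj, hk, add_smul]⟩
      · rw [MvPowerSeries.coeff_apply (f := Poch d (2 - (d 0 : ℤ) - s)) (d := p.2), Poch_coeff_zero _ h2,
          mul_zero]
    · rw [Phi_coeff, MvPowerSeries.coeff_apply (f := Poch d s) (d := p.1), Poch_coeff_zero s h1]
      simp

lemma quadForm_fin1 (c : ℤ) (f : Fin 1 → ℕ) : quadForm !![c] f = c * (f 0 : ℤ) * (f 0 : ℤ) := by
  simp [quadForm, Fin.sum_univ_one]

lemma Pser_coeff {N : ℕ} (C : Matrix (Fin N) (Fin N) ℤ) (e : Fin N →₀ ℕ) :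
    MvPowerSeries.coeff e (Pser C) = Pcoeff C (fun i => e i) := rfl

lemma Phi_Pser (m : ℕ) : Phi (Pser !![(m : ℤ) + 1]) = Pser !![-(m : ℤ)] := by
  apply MvPowerSeries.ext
  intro e
  rw [Phi_coeff, Pser_coeff, Pser_coeff, Pcoeff, Pcoeff, quadForm_fin1, quadForm_fin1,
    Fin.prod_univ_one]
  rw [map_div₀, sigma_qPoch, map_zpow₀, map_neg, sigma_qq]
  have hneg : ∀ z : ℤ, (-(qq⁻¹) : K) ^ z = (-1 : K) ^ z * qq ^ (-z) := fun z => by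
    rw [show (-(qq⁻¹) : K) = -1 * qq⁻¹ by ring, mul_zpow, inv_zpow']
  have hneg2 : ∀ z : ℤ, (-qq : K) ^ z = (-1 : K) ^ z * qq ^ z := fun z => by
    rw [show (-qq : K) = -1 * qq by ring, mul_zpow]
  rw [hneg, hneg2]
  have hm1 : (-1 : K) ≠ 0 := by norm_num
  have hden1 : (-1 : K) ^ (e 0 : ℕ) * qq ^ (-((e 0 : ℤ) * ((e 0 : ℤ) + 1)))
      * qPoch (qq ^ 2) (e 0) ≠ 0 :=
    mul_ne_zero (mul_ne_zero (pow_ne_zero _ hm1) (zpow_ne_zero _ qq_ne_zero))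
      (qPoch_ne_zero (e 0))
  rw [← mul_div_assoc]
  rw [div_eq_div_iff hden1 (qPoch_ne_zero (e 0))]
  obtain ⟨k, hk⟩ := Int.even_mul_succ_self ((e 0 : ℤ) - 1)
  have hsign : (-1 : K) ^ (((m : ℤ) + 1) * (e 0 : ℤ) * (e 0 : ℤ))
      = (-1 : K) ^ (-(m : ℤ) * (e 0 : ℤ) * (e 0 : ℤ)) * (-1 : K) ^ (e 0 : ℕ) := by
    rw [← zpow_natCast (-1 : K) (e 0), ← zpow_add₀ hm1]
    rw [show ((m : ℤ) + 1) * (e 0 : ℤ) * (e 0 : ℤ)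
        = (-(m : ℤ) * (e 0 : ℤ) * (e 0 : ℤ) + (e 0 : ℤ))
          + 2 * ((m : ℤ) * (e 0 : ℤ) * (e 0 : ℤ) + k) by linear_combination hk]
    rw [zpow_add₀ hm1, zpow_mul]
    norm_num
  have hq1 : qq ^ (-(e 0 : ℤ)) * qq ^ (-(((m : ℤ) + 1) * (e 0 : ℤ) * (e 0 : ℤ)))
      = qq ^ (-(m : ℤ) * (e 0 : ℤ) * (e 0 : ℤ)) * qq ^ (-((e 0 : ℤ) * ((e 0 : ℤ) + 1))) := by
    rw [← zpow_add₀ qq_ne_zero, ← zpow_add₀ qq_ne_zero]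
    congr 1
    ring
  linear_combination (qq ^ (-(e 0 : ℤ)) * qq ^ (-(((m : ℤ) + 1) * (e 0 : ℤ) * (e 0 : ℤ)))
      * qPoch (qq ^ 2) (e 0)) * hsign
    + ((-1 : K) ^ (-(m : ℤ) * (e 0 : ℤ) * (e 0 : ℤ)) * (-1 : K) ^ (e 0 : ℕ)
      * qPoch (qq ^ 2) (e 0)) * hq1


/-- **Lemma 2.6 (DT form, Eq. (2.16)):** if `Ω` is a DT-exponent function for the
`(m+1)`-loop quiver, then `(r,s) ↦ −Ω(r, 2−r−s)` is a DT-exponent function for the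
`(−m)`-loop quiver; equivalently `Ω^{−m}_r(q) = −q^{2−r}·Ω^{m+1}_r(q^{−1})`. -/
theorem statement5 (m : ℕ) (Ω : (Fin 1 →₀ ℕ) → ℤ → ℤ)
    (hΩ : IsDTExponent !![(m : ℤ) + 1] Ω) :
    IsDTExponent !![-(m : ℤ)] (fun d s => -Ω d (2 - (d 0 : ℤ) - s)) := by
  obtain ⟨hfin, hco⟩ := hΩ
  have hinjU : Function.Injective (Units.map (Phi : MvPowerSeries (Fin 1) K →+* _).toMonoidHom) := by
    intro u v h
    apply Units.ext
    apply Phi_injective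
    have h1 := congrArg (Units.val) h
    rw [Units.coe_map, Units.coe_map] at h1
    exact h1
  constructor
  · intro d hd
    refine Set.Finite.subset
      (Set.Finite.preimage (f := fun s : ℤ => 2 - (d 0 : ℤ) - s) ?_ (hfin d hd)) ?_
    · intro a _ b _ hab
      beta_reduce at hab
      omega
    · intro s hs
      simp only [Function.mem_support] at hs
      simp only [Set.mem_preimage, Function.mem_support]
      intro h0
      exact hs (by rw [h0, neg_zero])
  · intro n d hdn
    have hDT : Units.map Phi.toMonoidHom (DTProd Ω n)
        = DTProd (fun d s => -Ω d (2 - (d 0 : ℤ) - s)) n := by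
      rw [DTProd, DTProd]
      rw [MonoidHom.map_finprod_of_injective _ hinjU]
      apply finprod_congr
      intro d'
      rw [MonoidHom.map_finprod_of_injective _ hinjU]
      by_cases h : d' ≠ 0 ∧ (d'.sum fun _ c => c) ≤ n
      · have hkey : ∀ s : ℤ, Units.map Phi.toMonoidHom (PochUnit d' h.1 s)
            = (PochUnit d' h.1 (2 - (d' 0 : ℤ) - s))⁻¹ := by
          intro s
          apply eq_inv_of_mul_eq_one_right
          apply Units.ext
          rw [Units.val_mul, Units.val_one, Units.coe_map]
          rw [PochUnit, PochUnit, IsUnit.unit_spec, IsUnit.unit_spec, mul_comm]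
          exact Phi_Poch_mul h.1 s
        have hL : ∀ s : ℤ, Units.map Phi.toMonoidHom
            (if h' : d' ≠ 0 ∧ (d'.sum fun _ c => c) ≤ n
              then PochUnit d' h'.1 s ^ Ω d' s else 1)
            = PochUnit d' h.1 (2 - (d' 0 : ℤ) - s) ^ (-Ω d' s) := by
          intro s
          rw [dif_pos h, map_zpow, hkey, inv_zpow']
        rw [finprod_congr hL]
        have hR : ∀ s : ℤ, (if h' : d' ≠ 0 ∧ (d'.sum fun _ c => c) ≤ n
            then PochUnit d' h'.1 s ^ ((fun d s => -Ω d (2 - (d 0 : ℤ) - s)) d' s) else 1)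
            = PochUnit d' h.1 s ^ (-Ω d' (2 - (d' 0 : ℤ) - s)) := fun s => dif_pos h
        rw [finprod_congr hR]
        have hinv : Function.Involutive (fun s : ℤ => 2 - (d' 0 : ℤ) - s) := fun s => by
          simp only
          ring
        calc ∏ᶠ s : ℤ, PochUnit d' h.1 (2 - (d' 0 : ℤ) - s) ^ (-Ω d' s)
            = ∏ᶠ s : ℤ, (fun t : ℤ => PochUnit d' h.1 t ^ (-Ω d' (2 - (d' 0 : ℤ) - t)))
                (hinv.toPerm _ s) := by
              apply finprod_congr
              intro s
              show _ = PochUnit d' h.1 (2 - (d' 0 : ℤ) - s)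
                ^ (-Ω d' (2 - (d' 0 : ℤ) - (2 - (d' 0 : ℤ) - s)))
              rw [show 2 - (d' 0 : ℤ) - (2 - (d' 0 : ℤ) - s) = s by ring]
          _ = ∏ᶠ t : ℤ, PochUnit d' h.1 t ^ (-Ω d' (2 - (d' 0 : ℤ) - t)) :=
              finprod_comp_equiv
                (f := fun t : ℤ => PochUnit d' h.1 t ^ (-Ω d' (2 - (d' 0 : ℤ) - t)))
                (hinv.toPerm _)
      · have hL : ∀ s : ℤ, Units.map Phi.toMonoidHom
            (if h' : d' ≠ 0 ∧ (d'.sum fun _ c => c) ≤ n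
              then PochUnit d' h'.1 s ^ Ω d' s else 1) = 1 := by
          intro s
          rw [dif_neg h, map_one]
        rw [finprod_congr hL]
        have hR : ∀ s : ℤ, (if h' : d' ≠ 0 ∧ (d'.sum fun _ c => c) ≤ n
            then PochUnit d' h'.1 s ^ ((fun d s => -Ω d (2 - (d 0 : ℤ) - s)) d' s) else 1)
            = 1 := fun s => dif_neg h
        rw [finprod_congr hR]
    calc MvPowerSeries.coeff d (Pser !![-(m : ℤ)])
        = MvPowerSeries.coeff d (Phi (Pser !![(m : ℤ) + 1])) := by rw [Phi_Pser]
      _ = qq ^ (-(d 0 : ℤ)) * sigma (MvPowerSeries.coeff d (Pser !![(m : ℤ) + 1])) :=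
          Phi_coeff _ _
      _ = qq ^ (-(d 0 : ℤ)) * sigma (MvPowerSeries.coeff d ↑(DTProd Ω n)) := by
          rw [hco n d hdn]
      _ = MvPowerSeries.coeff d (Phi ↑(DTProd Ω n)) := (Phi_coeff _ _).symm
      _ = MvPowerSeries.coeff d ↑(DTProd (fun d s => -Ω d (2 - (d 0 : ℤ) - s)) n) := by
          rw [← hDT, Units.coe_map]
          rfl

end
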